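/- Let Φ = {φ_n}_{n=1}^N ⊆ ℝ^M satisfy the complement property, and for θ ∈ ℝ^M let Ψ(θ) be the M×N matrix whose n-th column is ⟨θ,φ_n⟩φ_n. Then for every nonzero θ ∈ ℝ^M, the matrix J(θ) = (4/σ²)·Ψ(θ)Ψ(θ)ᵀ is positive definite (for any σ > 0). -/

import Mathlib

open Matrix

lemma ortho_span_top' {M : ℕ} (x : Fin M → ℝ) (s : Set (Fin M → ℝ))
    (hs : Submodule.span ℝ s = ⊤) (h : ∀ v ∈ s, x ⬝ᵥ v = 0) : x = 0 := by
  let f : (Fin M → ℝ) →ₗ[ℝ] ℝ :=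
    { toFun := fun v => x ⬝ᵥ v
      map_add' := fun a b => dotProduct_add x a b
      map_smul' := fun c a => by simp [dotProduct_smul] }
  have hker : Submodule.span ℝ s ≤ LinearMap.ker f := by
    rw [Submodule.span_le]
    intro v hv
    exact h v hv
  have hx : f x = 0 := by
    have : x ∈ Submodule.span ℝ s := by rw [hs]; trivial
    exact hker this
  have : x ⬝ᵥ x = 0 := hx
  exact (dotProduct_self_eq_zero).mp this

theorem stmt_18 (M N : ℕ) (Φ : Fin N → Fin M → ℝ)
    (hCP : ∀ S : Set (Fin N),
        Submodule.span ℝ (Φ '' S) = ⊤ ∨ Submodule.span ℝ (Φ '' Sᶜ) = ⊤)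
    (σ : ℝ) (hσ : 0 < σ) (θ : Fin M → ℝ) (hθ : θ ≠ 0) :
    Matrix.PosDef (Matrix.of fun i j : Fin M =>
      (4 / σ ^ 2) * ∑ n, (θ ⬝ᵥ Φ n) ^ 2 * Φ n i * Φ n j) := by
  have key : ∀ x : Fin M → ℝ, (∀ n, (θ ⬝ᵥ Φ n) * (x ⬝ᵥ Φ n) = 0) → x = 0 := by
    intro x hx
    set S : Set (Fin N) := {n | θ ⬝ᵥ Φ n = 0} with hS
    have hspan : Submodule.span ℝ (Φ '' Sᶜ) = ⊤ := by
      rcases hCP S with h | h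
      · exfalso
        apply hθ
        apply ortho_span_top' θ _ h
        rintro v ⟨n, hn, rfl⟩
        exact hn
      · exact h
    apply ortho_span_top' x _ hspan
    rintro v ⟨n, hn, rfl⟩
    have hc : θ ⬝ᵥ Φ n ≠ 0 := hn
    have := hx n
    exact (mul_eq_zero.mp this).resolve_left hc
  rw [Matrix.posDef_iff_dotProduct_mulVec]
  constructor
  · ext i j
    simp only [Matrix.conjTranspose_apply, of_apply, star_trivial]
    congr 1
    apply Finset.sum_congr rfl
    intro n _
    ring
  · intro x hx
    have hAv : ∀ i, ((Matrix.of fun i j : Fin M =>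
        (4 / σ ^ 2) * ∑ n, (θ ⬝ᵥ Φ n) ^ 2 * Φ n i * Φ n j) *ᵥ x) i
        = (4 / σ ^ 2) * ∑ n, (θ ⬝ᵥ Φ n) ^ 2 * Φ n i * (x ⬝ᵥ Φ n) := by
      intro i
      simp only [mulVec, dotProduct, of_apply, Finset.sum_mul, Finset.mul_sum]
      rw [Finset.sum_comm]
      apply Finset.sum_congr rfl
      intro n _
      apply Finset.sum_congr rfl
      intro j _
      ring
    have hquad : star x ⬝ᵥ ((Matrix.of fun i j : Fin M =>
        (4 / σ ^ 2) * ∑ n, (θ ⬝ᵥ Φ n) ^ 2 * Φ n i * Φ n j) *ᵥ x)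
        = (4 / σ ^ 2) * ∑ n, ((θ ⬝ᵥ Φ n) * (x ⬝ᵥ Φ n)) ^ 2 := by
      simp only [star_trivial]
      rw [dotProduct]
      simp only [hAv]
      rw [Finset.mul_sum]
      simp only [Finset.mul_sum]
      rw [Finset.sum_comm]
      apply Finset.sum_congr rfl
      intro n _
      have h1 : ∑ i, x i * (4 / σ ^ 2 * ((θ ⬝ᵥ Φ n) ^ 2 * Φ n i * (x ⬝ᵥ Φ n)))
          = (4 / σ ^ 2 * ((θ ⬝ᵥ Φ n) ^ 2 * (x ⬝ᵥ Φ n))) * ∑ i, x i * Φ n i := by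
        rw [Finset.mul_sum]
        apply Finset.sum_congr rfl
        intro i _
        ring
      rw [h1]
      have he : ∑ i, x i * Φ n i = x ⬝ᵥ Φ n := rfl
      rw [he]
      ring
    rw [hquad]
    have hnn : ∀ n ∈ Finset.univ, (0:ℝ) ≤ ((θ ⬝ᵥ Φ n) * (x ⬝ᵥ Φ n)) ^ 2 :=
      fun n _ => sq_nonneg _
    have hsum : 0 ≤ ∑ n, ((θ ⬝ᵥ Φ n) * (x ⬝ᵥ Φ n)) ^ 2 := Finset.sum_nonneg hnn
    have hne : ∑ n, ((θ ⬝ᵥ Φ n) * (x ⬝ᵥ Φ n)) ^ 2 ≠ 0 := by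
      intro h0
      apply hx
      apply key
      intro n
      have := (Finset.sum_eq_zero_iff_of_nonneg hnn).mp h0 n (Finset.mem_univ n)
      exact pow_eq_zero_iff (by norm_num : (2:ℕ) ≠ 0) |>.mp this
    have hpos : 0 < ∑ n, ((θ ⬝ᵥ Φ n) * (x ⬝ᵥ Φ n)) ^ 2 := lt_of_le_of_ne hsum (Ne.symm hne)
    positivity
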